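/- Every exact distance labeling scheme for n-point metric spaces requires some label of length Ω(n log n) bits. Concretely: consider metric spaces on n points given by the shortest-path metrics of complete graphs with integer edge weights in {n+1, ..., 2n}; all n^{C(n,2)} choices of weights give distinct metrics (each edge weight equals the distance between its endpoints), and therefore any exact labeling must use labels of total length at least C(n,2)·log_2 n bits, so the maximum label length is at least (1/n)·C(n,2)·log_2 n = Ω(n log n) bits. -/

import Mathlib

private lemma sum_two_pow_lt (m : ℕ) : ∑ k ∈ Finset.range m, 2 ^ k < 2 ^ m := by
  induction m with
  | zero => simp
  | succ m ih =>
    rw [Finset.sum_range_succ, pow_succ]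
    omega

/-- exact distance labeling of general `n`-point metrics needs a label of
`Ω(n log n)` bits.  Consider complete graphs on `n` vertices with symmetric integer edge
weights in `{n+1, …, 2n}`.  (1) The direct edge is always the unique shortest path
(any two-edge path is strictly longer), so the shortest-path metric equals the weight
function and distinct weights give distinct metrics.  (2) If a labeling `l` with a
decoder `A` computes all distances exactly for every such weight function, and all
labels have at most `L` bits, then `C(n,2)·log₂ n ≤ n·(L+1)`, i.e. the maximum label
length is `Ω(n log n)` bits. -/
theorem stmt6 (n L : ℕ) (hn : 2 ≤ n)
    (l : (Fin n → Fin n → ℕ) → Fin n → List Bool)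
    (A : List Bool → List Bool → ℕ)
    (hdec : ∀ w : Fin n → Fin n → ℕ, (∀ i j, w i j = w j i) →
      (∀ i j, i ≠ j → n + 1 ≤ w i j ∧ w i j ≤ 2 * n) →
      ∀ i j, i ≠ j → A (l w i) (l w j) = w i j)
    (hlen : ∀ w : Fin n → Fin n → ℕ, (∀ i j, w i j = w j i) →
      (∀ i j, i ≠ j → n + 1 ≤ w i j ∧ w i j ≤ 2 * n) →
      ∀ i, (l w i).length ≤ L) :
    (∀ w : Fin n → Fin n → ℕ, (∀ i j, w i j = w j i) →
      (∀ i j, i ≠ j → n + 1 ≤ w i j ∧ w i j ≤ 2 * n) →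
      ∀ i j k : Fin n, i ≠ j → j ≠ k → i ≠ k → w i j < w i k + w k j)
    ∧ n.choose 2 * Nat.log 2 n ≤ n * (L + 1) := by
  constructor
  · intro w _ hb i j k hij hjk hik
    have h1 := hb i j hij
    have h2 := hb i k hik
    have h3 := hb k j (Ne.symm hjk)
    omega
  · -- counting argument
    set P := {a : Sym2 (Fin n) // ¬ a.IsDiag} with hP
    -- weight function from a choice c : P → Fin n
    have hmk : ∀ (i j : Fin n), i ≠ j → ¬ (s(i, j)).IsDiag := by
      intro i j hij
      rwa [Sym2.mk_isDiag_iff]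
    let w : (P → Fin n) → Fin n → Fin n → ℕ := fun c i j =>
      if h : i = j then n + 1 else n + 1 + (c ⟨s(i, j), hmk i j h⟩ : ℕ)
    have hsymm : ∀ c, ∀ i j, w c i j = w c j i := by
      intro c i j
      by_cases h : i = j
      · subst h; rfl
      · simp only [w, dif_neg h, dif_neg (Ne.symm h)]
        exact congrArg (fun p => n + 1 + (c p : ℕ)) (Subtype.ext Sym2.eq_swap)
    have hbound : ∀ c, ∀ i j : Fin n, i ≠ j → n + 1 ≤ w c i j ∧ w c i j ≤ 2 * n := by
      intro c i j h
      simp only [w, dif_neg h]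
      have := (c ⟨s(i, j), hmk i j h⟩).isLt
      omega
    -- encoding into bounded-length objects
    let φ : (P → Fin n) → (Fin n → Σ k : Fin (L + 1), List.Vector Bool k) := fun c i =>
      ⟨⟨(l (w c) i).length, by
          have := hlen (w c) (hsymm c) (hbound c) i; omega⟩, ⟨l (w c) i, rfl⟩⟩
    have hφ : Function.Injective φ := by
      intro c1 c2 h
      have hl : ∀ i, l (w c1) i = l (w c2) i := by
        intro i
        have := congrFun h i
        exact congrArg (fun x : (Σ k : Fin (L + 1), List.Vector Bool k) => x.2.toList) this
      funext p
      obtain ⟨a, ha⟩ := p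
      revert ha
      refine Sym2.ind (fun i j => ?_) a
      intro ha
      have hij : i ≠ j := by rwa [Sym2.mk_isDiag_iff] at ha
      have e1 := hdec (w c1) (hsymm c1) (hbound c1) i j hij
      have e2 := hdec (w c2) (hsymm c2) (hbound c2) i j hij
      rw [hl i, hl j] at e1
      have hw : w c1 i j = w c2 i j := by rw [← e1, ← e2]
      simp only [w, dif_neg hij] at hw
      exact Fin.val_injective (by omega)
    have hcard := Fintype.card_le_of_injective φ hφ
    have hcP : Fintype.card P = n.choose 2 := by
      show Fintype.card {a : Sym2 (Fin n) // ¬a.IsDiag} = n.choose 2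
      rw [Sym2.card_subtype_not_diag, Fintype.card_fin]
    rw [Fintype.card_fun, Fintype.card_fun, hcP, Fintype.card_fin] at hcard
    have hcS : Fintype.card (Σ k : Fin (L + 1), List.Vector Bool k) ≤ 2 ^ (L + 1) := by
      rw [Fintype.card_sigma]
      calc ∑ k : Fin (L + 1), Fintype.card (List.Vector Bool k)
          = ∑ k ∈ Finset.range (L + 1), 2 ^ k := by
            rw [← Fin.sum_univ_eq_sum_range]
            simp [card_vector]
        _ ≤ 2 ^ (L + 1) := (sum_two_pow_lt (L + 1)).le
    have key : n ^ n.choose 2 ≤ 2 ^ (n * (L + 1)) := by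
      calc n ^ n.choose 2
          ≤ (Fintype.card (Σ k : Fin (L + 1), List.Vector Bool k)) ^ n := hcard
        _ ≤ (2 ^ (L + 1)) ^ n := Nat.pow_le_pow_left hcS n
        _ = 2 ^ (n * (L + 1)) := by rw [← pow_mul, mul_comm]
    have h2 : 2 ^ (n.choose 2 * Nat.log 2 n) ≤ 2 ^ (n * (L + 1)) := by
      calc 2 ^ (n.choose 2 * Nat.log 2 n) = (2 ^ Nat.log 2 n) ^ n.choose 2 := by
            rw [← pow_mul, mul_comm]
        _ ≤ n ^ n.choose 2 :=
            Nat.pow_le_pow_left (Nat.pow_log_le_self 2 (by omega)) _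
        _ ≤ 2 ^ (n * (L + 1)) := key
    exact (Nat.pow_le_pow_iff_right (by norm_num)).mp h2
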